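/- Let 𝒜 : ℝ → Matrix (Fin (2m)) (Fin (2m)) ℝ be a family of symmetric matrices with entries differentiable at θ₀, let X = [[0, I_m], [I_m, 0]], and suppose X − 𝒜(θ₀) is invertible and det(I − X·𝒜(θ)) > 0 near θ₀. For n̄ = (n_1,…,n_m) ∈ ℕ^m define P(θ, n̄) = (det(I − X·𝒜(θ)))^{1/2} · Haf(𝒜(θ)_{n̄ ⊕ n̄}) / (n_1! ⋯ n_m!), where n̄ ⊕ n̄ = (n_1,…,n_m,n_1,…,n_m) ∈ ℕ^{2m}. Then θ ↦ P(θ, n̄) is differentiable at θ₀ with derivative −(1/2)·Tr[(X − 𝒜)^{-1} 𝒜'] · P(θ₀, n̄) + (det(I − X𝒜))^{1/2}/(n_1!⋯n_m!) · (1/2) · Σ_{i ≠ j} ((𝒜')_{n̄ ⊕ n̄})_{ij} · Haf((𝒜_{n̄ ⊕ n̄})_{−i−j}), all matrices evaluated at θ₀, with 𝒜' the entrywise derivative. -/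

import Mathlib

open Finset Matrix

open scoped Classical in
/-- The hafnian of a matrix: the sum over all perfect matchings of the index set
(encoded as fixed-point-free involutions `σ`), of the product of the entries
`A i (σ i)` over the pairs `{i, σ i}` (each pair taken once, via `i < σ i`).
For an empty index type this is `1`, and for an odd-cardinality index type it is `0`. -/
noncomputable def hafnian {ι : Type*} [Fintype ι] [LinearOrder ι] {R : Type*} [CommRing R]
    (A : Matrix ι ι R) : R :=
  ∑ σ ∈ Finset.univ.filter
      (fun σ : Equiv.Perm ι => σ * σ = 1 ∧ ∀ i, σ i ≠ i),
    ∏ i ∈ Finset.univ.filter (fun i => i < σ i), A i (σ i)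

/-- The index type for `A_v` (row/column `i` repeated `v i` times), ordered
lexicographically. -/
instance repIdxFintype {M : ℕ} (v : Fin M → ℕ) : Fintype (Σₗ i : Fin M, Fin (v i)) :=
  inferInstanceAs (Fintype ((i : Fin M) × Fin (v i)))

/-- `A_v`: the matrix obtained from the `M × M` matrix `A` by repeating row and column `i`
exactly `v i` times (deleting them when `v i = 0`). -/
def repMat {M : ℕ} {R : Type*} (A : Matrix (Fin M) (Fin M) R) (v : Fin M → ℕ) :
    Matrix (Σₗ i : Fin M, Fin (v i)) (Σₗ i : Fin M, Fin (v i)) R :=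
  A.submatrix (fun p => (ofLex p).1) (fun p => (ofLex p).1)

/-- `B_{−i−j}`: the matrix obtained from `B` by deleting rows `i, j` and columns `i, j`. -/
def delTwo {ι : Type*} {R : Type*} (A : Matrix ι ι R) (i j : ι) :
    Matrix {k : ι // k ≠ i ∧ k ≠ j} {k : ι // k ≠ i ∧ k ≠ j} R :=
  A.submatrix Subtype.val Subtype.val

/-- The `2m × 2m` block matrix `X = [[0, I_m], [I_m, 0]]`. -/
def Xswap (m : ℕ) : Matrix (Fin (2 * m)) (Fin (2 * m)) ℝ :=
  Matrix.of fun i j => if (i : ℕ) = (j : ℕ) + m ∨ (j : ℕ) = (i : ℕ) + m then 1 else 0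

/-- `n̄ ⊕ n̄ = (n_1,…,n_m,n_1,…,n_m) ∈ ℕ^{2m}`. -/
def doubled {m : ℕ} (n : Fin m → ℕ) : Fin (2 * m) → ℕ := fun i =>
  if h : (i : ℕ) < m then n ⟨i, h⟩ else n ⟨(i : ℕ) - m, by have := i.isLt; omega⟩

set_option linter.unusedSectionVars false

section DetDeriv

variable {κ : Type*} [Fintype κ] [DecidableEq κ]

lemma det_updateColumn_eq_sum (M₀ M' : Matrix κ κ ℝ) (i : κ) :
    (M₀.updateCol i (fun r => M' r i)).det = (M₀.adjugate * M') i i := by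
  rw [← Matrix.cramer_apply, Matrix.cramer_eq_adjugate_mulVec]
  simp [Matrix.mulVec, Matrix.mul_apply, dotProduct]

lemma hasDerivAt_det (M : ℝ → Matrix κ κ ℝ) (M' : Matrix κ κ ℝ) (θ₀ : ℝ)
    (hd : ∀ i j, HasDerivAt (fun θ => M θ i j) (M' i j) θ₀) :
    HasDerivAt (fun θ => (M θ).det) ((Matrix.adjugate (M θ₀) * M').trace) θ₀ := by
  have h1 : HasDerivAt (fun θ => (M θ).det)
      (∑ σ : Equiv.Perm κ, ((Equiv.Perm.sign σ : ℤ) : ℝ) *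
        ∑ k, (∏ l ∈ Finset.univ.erase k, M θ₀ (σ l) l) • M' (σ k) k) θ₀ := by
    have : (fun θ => (M θ).det)
        = fun θ => ∑ σ : Equiv.Perm κ, ((Equiv.Perm.sign σ : ℤ) : ℝ) * ∏ i, M θ (σ i) i := by
      funext θ; rw [Matrix.det_apply']
    rw [this]
    exact HasDerivAt.fun_sum fun σ _ =>
      ((HasDerivAt.fun_finsetProd (fun k _ => hd (σ k) k)).const_mul _)
  convert h1 using 1
  have hupd : ∀ i : κ, ((M θ₀).adjugate * M') i i
      = ∑ σ : Equiv.Perm κ, ((Equiv.Perm.sign σ : ℤ) : ℝ) *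
          (M' (σ i) i * ∏ l ∈ Finset.univ.erase i, M θ₀ (σ l) l) := by
    intro i
    rw [← det_updateColumn_eq_sum, Matrix.det_apply']
    refine Finset.sum_congr rfl fun σ _ => ?_
    congr 1
    rw [← Finset.mul_prod_erase Finset.univ _ (Finset.mem_univ i)]
    rw [Matrix.updateCol_self]
    congr 1
    refine Finset.prod_congr rfl fun l hl => ?_
    rw [Matrix.updateCol_ne (Finset.mem_erase.1 hl).1]
  rw [Matrix.trace]
  simp only [Matrix.diag]
  rw [Finset.sum_congr rfl fun i _ => hupd i, Finset.sum_comm]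
  refine Finset.sum_congr rfl fun σ _ => ?_
  rw [← Finset.mul_sum]
  congr 1
  refine Finset.sum_congr rfl fun k _ => ?_
  rw [smul_eq_mul, mul_comm]

end DetDeriv

section XswapAux



def partner {m : ℕ} (i : Fin (2 * m)) : Fin (2 * m) :=
  ⟨if (i : ℕ) < m then (i : ℕ) + m else (i : ℕ) - m, by have := i.isLt; split <;> omega⟩

lemma Xswap_apply_eq {m : ℕ} (i j : Fin (2 * m)) :
    Xswap m i j = if j = partner i then 1 else 0 := by
  have hm := i.isLt
  have : ((i : ℕ) = (j : ℕ) + m ∨ (j : ℕ) = (i : ℕ) + m) ↔ j = partner i := by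
    rw [Fin.ext_iff]
    show _ ↔ (j : ℕ) = if (i : ℕ) < m then (i : ℕ) + m else (i : ℕ) - m
    have := j.isLt
    split <;> omega
  rw [Xswap]
  simp only [Matrix.of_apply, this]

lemma partner_partner {m : ℕ} (i : Fin (2 * m)) : partner (partner i) = i := by
  have := i.isLt
  unfold partner
  simp only [Fin.ext_iff, Fin.val_mk]
  split_ifs <;> omega

lemma Xswap_mul_self (m : ℕ) : Xswap m * Xswap m = 1 := by
  ext i j
  rw [Matrix.mul_apply]
  simp only [Xswap_apply_eq, ite_mul, one_mul, zero_mul]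
  rw [Finset.sum_ite_eq' Finset.univ (partner i) (fun k => if j = partner k then (1:ℝ) else 0)]
  simp [partner_partner, Matrix.one_apply, eq_comm]

lemma Xswap_inv (m : ℕ) : (Xswap m)⁻¹ = Xswap m :=
  Matrix.inv_eq_right_inv (Xswap_mul_self m)

end XswapAux

section Haf
open scoped Classical

variable {ι : Type*} [Fintype ι] [LinearOrder ι]

lemma inv_apply' {σ : Equiv.Perm ι} (h : σ * σ = 1) (k : ι) : σ (σ k) = k := by
  rw [← Equiv.Perm.mul_apply, h, Equiv.Perm.one_apply]

lemma swap_ofSubtype_apply {i j : ι} (τ : Equiv.Perm {k : ι // k ≠ i ∧ k ≠ j}) (a : ι) :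
    (Equiv.swap i j * Equiv.Perm.ofSubtype τ) a
      = if h : a ≠ i ∧ a ≠ j then (τ ⟨a, h⟩ : ι) else Equiv.swap i j a := by
  by_cases h : a ≠ i ∧ a ≠ j
  · rw [dif_pos h, Equiv.Perm.mul_apply, Equiv.Perm.ofSubtype_apply_of_mem τ h]
    exact Equiv.swap_apply_of_ne_of_ne (τ ⟨a, h⟩).2.1 (τ ⟨a, h⟩).2.2
  · rw [dif_neg h, Equiv.Perm.mul_apply, Equiv.Perm.ofSubtype_apply_of_not_mem τ h]

lemma haf_delTwo_eq (B : Matrix ι ι ℝ) (i j : ι) (hij : i ≠ j) :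
    hafnian (delTwo B i j) =
      ∑ σ ∈ Finset.univ.filter
          (fun σ : Equiv.Perm ι => (σ * σ = 1 ∧ ∀ k, σ k ≠ k) ∧ σ i = j),
        ∏ k ∈ Finset.univ.filter (fun k => k < σ k ∧ k ≠ i ∧ k ≠ j), B k (σ k) := by
  rw [hafnian]
  have hp : ∀ σ ∈ Finset.univ.filter
      (fun σ : Equiv.Perm ι => (σ * σ = 1 ∧ ∀ k, σ k ≠ k) ∧ σ i = j),
      ∀ k : ι, (k ≠ i ∧ k ≠ j) ↔ (σ k ≠ i ∧ σ k ≠ j) := by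
    intro σ hσ k
    simp only [Finset.mem_filter] at hσ
    obtain ⟨-, ⟨h1, h2⟩, h3⟩ := hσ
    have hji : σ j = i := by rw [← h3, inv_apply' h1]
    constructor
    · rintro ⟨hki, hkj⟩
      refine ⟨fun hc => hkj ?_, fun hc => hki ?_⟩
      · rw [← inv_apply' h1 k, hc, h3]
      · rw [← inv_apply' h1 k, hc, hji]
    · rintro ⟨hki, hkj⟩
      refine ⟨fun hc => hkj ?_, fun hc => hki ?_⟩
      · rw [hc, h3]
      · rw [hc, hji]
  refine Finset.sum_bij'
    (i := fun (τ : Equiv.Perm {k : ι // k ≠ i ∧ k ≠ j}) _ =>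
      Equiv.swap i j * Equiv.Perm.ofSubtype τ)
    (j := fun σ hσ => σ.subtypePerm (fun k => (hp σ hσ k).symm)) ?_ ?_ ?_ ?_ ?_
  · -- hi : maps into the filter
    intro τ hτ
    simp only [Finset.mem_filter] at hτ ⊢
    obtain ⟨-, hτ1, hτ2⟩ := hτ
    refine ⟨Finset.mem_univ _, ⟨?_, ?_⟩, ?_⟩
    · ext a
      rw [Equiv.Perm.mul_apply, Equiv.Perm.one_apply, swap_ofSubtype_apply,
        swap_ofSubtype_apply]
      by_cases h : a ≠ i ∧ a ≠ j
      · rw [dif_pos h]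
        rw [dif_pos (τ ⟨a, h⟩).2]
        have : τ ⟨(τ ⟨a, h⟩ : ι), (τ ⟨a, h⟩).2⟩ = τ (τ ⟨a, h⟩) := by congr
        rw [this, inv_apply' hτ1]
      · rw [dif_neg h]
        rcases not_and_or.1 h with h' | h' <;> rw [not_not] at h'
        · subst h'
          rw [Equiv.swap_apply_left]
          rw [dif_neg (by simp)]
          exact Equiv.swap_apply_right _ _
        · subst h'
          rw [Equiv.swap_apply_right]
          rw [dif_neg (by simp)]
          exact Equiv.swap_apply_left _ _
    · intro a
      rw [swap_ofSubtype_apply]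
      by_cases h : a ≠ i ∧ a ≠ j
      · rw [dif_pos h]
        intro hc
        exact hτ2 ⟨a, h⟩ (Subtype.ext hc)
      · rw [dif_neg h]
        rcases not_and_or.1 h with h' | h' <;> rw [not_not] at h'
        · subst h'; rw [Equiv.swap_apply_left]; exact fun hc => hij hc.symm
        · subst h'; rw [Equiv.swap_apply_right]; exact hij
    · rw [swap_ofSubtype_apply, dif_neg (by simp), Equiv.swap_apply_left]
  · -- hj : maps back into the matchings
    intro σ hσ
    simp only [Finset.mem_filter] at hσ ⊢
    obtain ⟨-, ⟨h1, h2⟩, h3⟩ := hσ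
    refine ⟨Finset.mem_univ _, ?_, ?_⟩
    · ext x
      rw [Equiv.Perm.mul_apply, Equiv.Perm.one_apply, Equiv.Perm.subtypePerm_apply,
        Equiv.Perm.subtypePerm_apply]
      show σ (σ (x : ι)) = (x : ι)
      exact inv_apply' h1 x
    · intro x hc
      exact h2 x (congrArg Subtype.val hc)
  · -- left_inv
    intro τ hτ
    ext x
    simp only [Equiv.Perm.subtypePerm_apply]
    rw [swap_ofSubtype_apply, dif_pos x.2]
  · -- right_inv
    intro σ hσ
    simp only [Finset.mem_filter] at hσ
    obtain ⟨-, ⟨h1, h2⟩, h3⟩ := hσ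
    have hji : σ j = i := by rw [← h3, inv_apply' h1]
    ext a
    rw [swap_ofSubtype_apply]
    by_cases h : a ≠ i ∧ a ≠ j
    · rw [dif_pos h, Equiv.Perm.subtypePerm_apply]
    · rw [dif_neg h]
      rcases not_and_or.1 h with h' | h' <;> rw [not_not] at h'
      · subst h'; rw [Equiv.swap_apply_left, h3]
      · subst h'; rw [Equiv.swap_apply_right, hji]
  · -- values
    intro τ hτ
    refine Finset.prod_bij' (i := fun k _ => (k : ι))
      (j := fun a ha => ⟨a, by
        simp only [Finset.mem_filter] at ha
        exact ha.2.2⟩) ?_ ?_ ?_ ?_ ?_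
    · intro k hk
      simp only [Finset.mem_filter] at hk ⊢
      refine ⟨Finset.mem_univ _, ?_, k.2.1, k.2.2⟩
      rw [swap_ofSubtype_apply, dif_pos k.2]
      exact Subtype.coe_lt_coe.2 hk.2
    · intro a ha
      simp only [Finset.mem_filter] at ha ⊢
      obtain ⟨-, hlt, hai, haj⟩ := ha
      refine ⟨Finset.mem_univ _, ?_⟩
      rw [swap_ofSubtype_apply, dif_pos ⟨hai, haj⟩] at hlt
      exact Subtype.coe_lt_coe.1 hlt
    · intro k hk; rfl
    · intro a ha; rfl
    · intro k hk
      rw [delTwo, Matrix.submatrix_apply, swap_ofSubtype_apply, dif_pos k.2]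


lemma H_symm (B : Matrix ι ι ℝ) (i j : ι) :
    (∑ σ ∈ Finset.univ.filter
        (fun σ : Equiv.Perm ι => (σ * σ = 1 ∧ ∀ k, σ k ≠ k) ∧ σ i = j),
      ∏ k ∈ Finset.univ.filter (fun k => k < σ k ∧ k ≠ i ∧ k ≠ j), B k (σ k))
    = ∑ σ ∈ Finset.univ.filter
        (fun σ : Equiv.Perm ι => (σ * σ = 1 ∧ ∀ k, σ k ≠ k) ∧ σ j = i),
      ∏ k ∈ Finset.univ.filter (fun k => k < σ k ∧ k ≠ j ∧ k ≠ i), B k (σ k) := by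
  have hset : Finset.univ.filter
        (fun σ : Equiv.Perm ι => (σ * σ = 1 ∧ ∀ k, σ k ≠ k) ∧ σ i = j)
      = Finset.univ.filter
        (fun σ : Equiv.Perm ι => (σ * σ = 1 ∧ ∀ k, σ k ≠ k) ∧ σ j = i) := by
    apply Finset.filter_congr
    intro σ _
    constructor
    · rintro ⟨hm, h3⟩; exact ⟨hm, by rw [← h3, inv_apply' hm.1]⟩
    · rintro ⟨hm, h3⟩; exact ⟨hm, by rw [← h3, inv_apply' hm.1]⟩
  rw [hset]
  refine Finset.sum_congr rfl fun σ _ => Finset.prod_congr ?_ fun _ _ => rfl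
  apply Finset.filter_congr; intro k _; tauto

lemma hasDerivAt_hafnian (B : ℝ → Matrix ι ι ℝ) (B' : Matrix ι ι ℝ) (θ₀ : ℝ)
    (hd : ∀ i j, HasDerivAt (fun θ => B θ i j) (B' i j) θ₀)
    (hs : ∀ i j, B' i j = B' j i) :
    HasDerivAt (fun θ => hafnian (B θ))
      ((1 / 2) * ∑ i, ∑ j ∈ Finset.univ.filter (fun j => j ≠ i),
        B' i j * hafnian (delTwo (B θ₀) i j)) θ₀ := by
  have h1 : HasDerivAt (fun θ => hafnian (B θ))
      (∑ σ ∈ Finset.univ.filter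
          (fun σ : Equiv.Perm ι => σ * σ = 1 ∧ ∀ k, σ k ≠ k),
        ∑ k ∈ Finset.univ.filter (fun k => k < σ k),
          (∏ l ∈ (Finset.univ.filter (fun l => l < σ l)).erase k, B θ₀ l (σ l))
            • B' k (σ k)) θ₀ := by
    have heq : (fun θ => hafnian (B θ))
        = fun θ => ∑ σ ∈ Finset.univ.filter
            (fun σ : Equiv.Perm ι => σ * σ = 1 ∧ ∀ k, σ k ≠ k),
          ∏ k ∈ Finset.univ.filter (fun k => k < σ k), B θ k (σ k) := by
      funext θ; rw [hafnian]
    rw [heq]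
    exact HasDerivAt.fun_sum fun σ _ => HasDerivAt.fun_finsetProd fun k _ => hd k (σ k)
  convert h1 using 1
  -- abbreviations
  set S := Finset.univ.filter
      (fun σ : Equiv.Perm ι => σ * σ = 1 ∧ ∀ k, σ k ≠ k) with hS
  set H : ι → ι → ℝ := fun i j => ∑ σ ∈ Finset.univ.filter
        (fun σ : Equiv.Perm ι => (σ * σ = 1 ∧ ∀ k, σ k ≠ k) ∧ σ i = j),
      ∏ k ∈ Finset.univ.filter (fun k => k < σ k ∧ k ≠ i ∧ k ≠ j), B θ₀ k (σ k) with hH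
  -- step 1 : rewrite hafnians
  have step1 : (∑ i, ∑ j ∈ Finset.univ.filter (fun j => j ≠ i),
      B' i j * hafnian (delTwo (B θ₀) i j))
      = ∑ i, ∑ j ∈ Finset.univ.filter (fun j => j ≠ i), B' i j * H i j := by
    refine Finset.sum_congr rfl fun i _ => Finset.sum_congr rfl fun j hj => ?_
    rw [haf_delTwo_eq (B θ₀) i j (Ne.symm (Finset.mem_filter.1 hj).2)]
  -- step 3 prep : symmetry of g
  have hg : ∀ i j : ι, B' j i * H j i = B' i j * H i j := by
    intro i j
    rw [hs i j, hH]
    congr 1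
    exact (H_symm (B θ₀) i j).symm
  -- step 2+3 : half-sum to ordered sum
  have step2 : (∑ i, ∑ j ∈ Finset.univ.filter (fun j => j ≠ i), B' i j * H i j)
      = 2 * ∑ i, ∑ j ∈ Finset.univ.filter (fun j => i < j), B' i j * H i j := by
    have hsplit : ∀ i : ι, (∑ j ∈ Finset.univ.filter (fun j => j ≠ i), B' i j * H i j)
        = (∑ j ∈ Finset.univ.filter (fun j => i < j), B' i j * H i j)
          + ∑ j ∈ Finset.univ.filter (fun j => j < i), B' i j * H i j := by
      intro i
      have hone : Finset.univ.filter (fun j => j ≠ i)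
          = Finset.univ.filter (fun j => i < j) ∪ Finset.univ.filter (fun j => j < i) := by
        rw [← Finset.filter_or]
        apply Finset.filter_congr
        intro j _
        constructor
        · intro h; exact (Ne.lt_or_gt h).symm.imp id id
        · rintro (h | h)
          · exact h.ne'
          · exact h.ne
      rw [hone, Finset.sum_union]
      rw [Finset.disjoint_left]
      intro a ha hb
      simp only [Finset.mem_filter] at ha hb
      exact absurd hb.2 (not_lt_of_gt ha.2)
    rw [Finset.sum_congr rfl fun i _ => hsplit i, Finset.sum_add_distrib, two_mul]
    congr 1
    -- swap the roles of i and j in the second sum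
    calc (∑ i, ∑ j ∈ Finset.univ.filter (fun j => j < i), B' i j * H i j)
        = ∑ i : ι, ∑ j : ι, if j < i then B' i j * H i j else 0 := by
          refine Finset.sum_congr rfl fun i _ => ?_
          rw [Finset.sum_filter]
      _ = ∑ j : ι, ∑ i : ι, if j < i then B' i j * H i j else 0 := Finset.sum_comm
      _ = ∑ i : ι, ∑ j ∈ Finset.univ.filter (fun j => i < j), B' j i * H j i := by
          refine Finset.sum_congr rfl fun i _ => ?_
          rw [Finset.sum_filter]
      _ = ∑ i, ∑ j ∈ Finset.univ.filter (fun j => i < j), B' i j * H i j := by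
          refine Finset.sum_congr rfl fun i _ => Finset.sum_congr rfl fun j _ => hg i j
  rw [step1, step2, ← mul_assoc]
  norm_num
  -- now the ordered sum equals the raw derivative
  have herase : ∀ σ ∈ S, ∀ i : ι, i < σ i →
      Finset.univ.filter (fun k => k < σ k ∧ k ≠ i ∧ k ≠ σ i)
        = (Finset.univ.filter (fun l => l < σ l)).erase i := by
    intro σ hσ i hi
    have h1 : σ * σ = 1 := (Finset.mem_filter.1 hσ).2.1
    ext l
    simp only [Finset.mem_filter, Finset.mem_erase, Finset.mem_univ, true_and]
    constructor
    · rintro ⟨hlt, hne, -⟩; exact ⟨hne, hlt⟩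
    · rintro ⟨hne, hlt⟩
      refine ⟨hlt, hne, fun hc => ?_⟩
      subst hc
      rw [inv_apply' h1] at hlt
      exact absurd hi (not_lt_of_gt hlt)
  calc (∑ i, ∑ j ∈ Finset.univ.filter (fun j => i < j), B' i j * H i j)
      = ∑ i : ι, ∑ σ ∈ S, if i < σ i then B' i (σ i) *
          ∏ k ∈ Finset.univ.filter (fun k => k < σ k ∧ k ≠ i ∧ k ≠ σ i), B θ₀ k (σ k)
        else 0 := by
        refine Finset.sum_congr rfl fun i _ => ?_
        rw [Finset.sum_filter]
        calc (∑ j : ι, if i < j then B' i j * H i j else 0)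
            = ∑ j : ι, ∑ σ ∈ S, if j = σ i then
                (if i < j then B' i j *
                  ∏ k ∈ Finset.univ.filter (fun k => k < σ k ∧ k ≠ i ∧ k ≠ j), B θ₀ k (σ k)
                 else 0) else 0 := by
              refine Finset.sum_congr rfl fun j _ => ?_
              by_cases hij : i < j
              · rw [if_pos hij, hH]
                simp only
                rw [Finset.mul_sum, ← Finset.filter_filter, Finset.sum_filter]
                refine Finset.sum_congr rfl fun σ _ => ?_
                by_cases h : σ i = j
                · rw [if_pos h, if_pos h.symm, if_pos hij]
                · rw [if_neg h, if_neg (fun hc => h hc.symm)]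
              · rw [if_neg hij]
                symm
                refine Finset.sum_eq_zero fun σ _ => ?_
                by_cases h : j = σ i
                · rw [if_pos h, if_neg hij]
                · rw [if_neg h]
          _ = ∑ σ ∈ S, ∑ j : ι, if j = σ i then
                (if i < j then B' i j *
                  ∏ k ∈ Finset.univ.filter (fun k => k < σ k ∧ k ≠ i ∧ k ≠ j), B θ₀ k (σ k)
                 else 0) else 0 := Finset.sum_comm
          _ = _ := by
              refine Finset.sum_congr rfl fun σ _ => ?_
              rw [Finset.sum_ite_eq' Finset.univ (σ i)]
              rw [if_pos (Finset.mem_univ _)]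
    _ = ∑ σ ∈ S, ∑ i ∈ Finset.univ.filter (fun i => i < σ i),
          (∏ l ∈ (Finset.univ.filter (fun l => l < σ l)).erase i, B θ₀ l (σ l))
            • B' i (σ i) := by
        rw [Finset.sum_comm]
        refine Finset.sum_congr rfl fun σ hσ => ?_
        rw [Finset.sum_filter]
        refine Finset.sum_congr rfl fun i _ => ?_
        by_cases h : i < σ i
        · rw [if_pos h, if_pos h, herase σ hσ i h, smul_eq_mul, mul_comm]
        · rw [if_neg h, if_neg h]


end Haf

/-- the derivative at `θ₀` of the GBS probability
`P(θ, n̄) = det(I − X·𝒜(θ))^{1/2} · Haf(𝒜(θ)_{n̄⊕n̄}) / (n_1!⋯n_m!)` for a family `𝒜` of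
symmetric `2m × 2m` matrices (entrywise derivative `𝒜'` at `θ₀`, `X − 𝒜(θ₀)` invertible,
`det(I − X·𝒜) > 0` near `θ₀`) equals
`−(1/2)·Tr[(X−𝒜)⁻¹𝒜']·P(θ₀,n̄) + det(I−X𝒜)^{1/2}/(n̄!)·(1/2)·Σ_{i≠j} ((𝒜')_{n̄⊕n̄})_{ij}·Haf((𝒜_{n̄⊕n̄})_{−i−j})`. -/
theorem hasDerivAt_gbs_prob {m : ℕ}
    (𝒜 : ℝ → Matrix (Fin (2 * m)) (Fin (2 * m)) ℝ)
    (𝒜' : Matrix (Fin (2 * m)) (Fin (2 * m)) ℝ) (θ₀ : ℝ)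
    (hsymm : ∀ θ, (𝒜 θ).IsSymm)
    (hdiff : ∀ i j, HasDerivAt (fun θ => 𝒜 θ i j) (𝒜' i j) θ₀)
    (hinv : IsUnit (Xswap m - 𝒜 θ₀))
    (hpos : ∀ᶠ θ in nhds θ₀, 0 < (1 - Xswap m * 𝒜 θ).det)
    (n : Fin m → ℕ) :
    HasDerivAt
      (fun θ => Real.sqrt (1 - Xswap m * 𝒜 θ).det * hafnian (repMat (𝒜 θ) (doubled n)) /
        ∏ i, (Nat.factorial (n i) : ℝ))
      (-(1 / 2) * Matrix.trace ((Xswap m - 𝒜 θ₀)⁻¹ * 𝒜') *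
          (Real.sqrt (1 - Xswap m * 𝒜 θ₀).det * hafnian (repMat (𝒜 θ₀) (doubled n)) /
            ∏ i, (Nat.factorial (n i) : ℝ)) +
        Real.sqrt (1 - Xswap m * 𝒜 θ₀).det / (∏ i, (Nat.factorial (n i) : ℝ)) * ((1 / 2) *
          ∑ i, ∑ j ∈ Finset.univ.filter (fun j => j ≠ i),
            repMat 𝒜' (doubled n) i j *
              hafnian (delTwo (repMat (𝒜 θ₀) (doubled n)) i j))) θ₀ := by
  classical
  have hd0 : 0 < (1 - Xswap m * 𝒜 θ₀).det := hpos.self_of_nhds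
  set d := (1 - Xswap m * 𝒜 θ₀).det with hdd
  set T := Matrix.trace ((Xswap m - 𝒜 θ₀)⁻¹ * 𝒜') with hT
  have hA'symm : ∀ i j, 𝒜' i j = 𝒜' j i := by
    intro i j
    refine HasDerivAt.unique (hdiff i j) ?_
    have heq : (fun θ => 𝒜 θ i j) = fun θ => 𝒜 θ j i := by
      funext θ
      conv_lhs => rw [← hsymm θ]
      rw [Matrix.transpose_apply]
    rw [heq]
    exact hdiff j i
  have hXX := Xswap_mul_self m
  have hM0 : (1 - Xswap m * 𝒜 θ₀) = Xswap m * (Xswap m - 𝒜 θ₀) := by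
    rw [Matrix.mul_sub, hXX]
  have hdet_unit : IsUnit d := isUnit_iff_ne_zero.2 hd0.ne'
  have hdet : HasDerivAt (fun θ => (1 - Xswap m * 𝒜 θ).det) (-(d * T)) θ₀ := by
    have hent : ∀ i j, HasDerivAt (fun θ => (1 - Xswap m * 𝒜 θ) i j)
        ((-(Xswap m * 𝒜')) i j) θ₀ := by
      intro i j
      have heq : (fun θ => (1 - Xswap m * 𝒜 θ) i j)
          = fun θ => (1 : Matrix (Fin (2 * m)) (Fin (2 * m)) ℝ) i j
              - ∑ k, Xswap m i k * 𝒜 θ k j := by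
        funext θ; rw [Matrix.sub_apply, Matrix.mul_apply]
      rw [heq]
      have h : HasDerivAt (fun θ => (1 : Matrix (Fin (2 * m)) (Fin (2 * m)) ℝ) i j
          - ∑ k, Xswap m i k * 𝒜 θ k j) _ θ₀ := (hasDerivAt_const θ₀ ((1 : Matrix (Fin (2 * m)) (Fin (2 * m)) ℝ) i j)).sub
        (HasDerivAt.fun_sum (u := Finset.univ) fun k _ => (hdiff k j).const_mul (Xswap m i k))
      convert h using 1
      simp [Matrix.mul_apply]
    have h := hasDerivAt_det (fun θ => 1 - Xswap m * 𝒜 θ) (-(Xswap m * 𝒜')) θ₀ hent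
    convert h using 1
    have hadj : Matrix.adjugate (1 - Xswap m * 𝒜 θ₀) = d • (1 - Xswap m * 𝒜 θ₀)⁻¹ := by
      rw [Matrix.inv_def, smul_smul, Ring.mul_inverse_cancel _ hdet_unit, one_smul]
    have hinvmul : (1 - Xswap m * 𝒜 θ₀)⁻¹ * (Xswap m * 𝒜')
        = (Xswap m - 𝒜 θ₀)⁻¹ * 𝒜' := by
      rw [hM0, Matrix.mul_inv_rev, Xswap_inv, Matrix.mul_assoc,
        ← Matrix.mul_assoc (Xswap m), hXX, Matrix.one_mul]
    rw [Matrix.mul_neg, Matrix.trace_neg, hadj, Matrix.smul_mul, Matrix.trace_smul,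
      hinvmul, smul_eq_mul, hT]
  have hsqrt : HasDerivAt (fun θ => Real.sqrt (1 - Xswap m * 𝒜 θ).det)
      (-(1 / 2) * T * Real.sqrt d) θ₀ := by
    have h := hdet.sqrt hd0.ne'
    convert h using 1
    have hsp : (0 : ℝ) < Real.sqrt d := Real.sqrt_pos.2 hd0
    rw [eq_div_iff (by positivity)]
    have hss : Real.sqrt d * Real.sqrt d = d := Real.mul_self_sqrt hd0.le
    linear_combination (-T) * hss
  have hhaf := hasDerivAt_hafnian (fun θ => repMat (𝒜 θ) (doubled n))
    (repMat 𝒜' (doubled n)) θ₀ (fun p q => hdiff (ofLex p).1 (ofLex q).1)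
    (fun p q => hA'symm (ofLex p).1 (ofLex q).1)
  have hmul : HasDerivAt (fun θ => Real.sqrt (1 - Xswap m * 𝒜 θ).det *
      hafnian (repMat (𝒜 θ) (doubled n)) / ∏ i, (Nat.factorial (n i) : ℝ)) _ θ₀ :=
    (hsqrt.mul hhaf).div_const (∏ i, (Nat.factorial (n i) : ℝ))
  convert hmul using 1
  rw [← hdd]
  ring_nf
  congr!
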